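/- Only the strongly connected component containing a deleted vertex can split: let E''' be obtained from E by removing the vertex w together with all its incident edges, i.e. E''' a b := E a b ∧ a ≠ w ∧ b ≠ w. If vertices x and y are strongly connected under E and x is not strongly connected to w under E, then x and y are strongly connected under E'''. -/
import Mathlib


def SConn {V : Type*} (E : V → V → Prop) (x y : V) : Prop :=
  Relation.ReflTransGen E x y ∧ Relation.ReflTransGen E y x

private lemma avoid_or_through {V : Type*} (E : V → V → Prop) (w : V)
    (E''' : V → V → Prop) (hE''' : ∀ a b, E''' a b ↔ E a b ∧ a ≠ w ∧ b ≠ w)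
    {x y : V} (hx : x ≠ w) (hy : y ≠ w) (h : Relation.ReflTransGen E x y) :
    Relation.ReflTransGen E''' x y ∨
      (Relation.ReflTransGen E x w ∧ Relation.ReflTransGen E w y) := by
  induction h with
  | refl => exact Or.inl Relation.ReflTransGen.refl
  | @tail b c hb hbc ih =>
    by_cases hbw : b = w
    · subst hbw
      exact Or.inr ⟨hb, Relation.ReflTransGen.single hbc⟩
    · rcases ih hbw with h1 | ⟨h1, h2⟩
      · exact Or.inl (h1.tail ((hE''' b c).2 ⟨hbc, hbw, hy⟩))
      · exact Or.inr ⟨h1, h2.tail hbc⟩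

theorem only_scc_of_deleted_vertex_splits {V : Type*} (E : V → V → Prop) (w : V)
    (E''' : V → V → Prop) (hE''' : ∀ a b, E''' a b ↔ E a b ∧ a ≠ w ∧ b ≠ w)
    (x y : V) (hxy : SConn E x y) (hxw : ¬ SConn E x w) :
    SConn E''' x y := by
  obtain ⟨hxy1, hyx1⟩ := hxy
  have hx : x ≠ w := by rintro rfl; exact hxw ⟨.refl, .refl⟩
  have hy : y ≠ w := by rintro rfl; exact hxw ⟨hxy1, hyx1⟩
  rcases avoid_or_through E w E''' hE''' hx hy hxy1 with h1 | ⟨h1, h2⟩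
  · rcases avoid_or_through E w E''' hE''' hy hx hyx1 with h2 | ⟨h2, h3⟩
    · exact ⟨h1, h2⟩
    · exact absurd ⟨hxy1.trans h2, h3⟩ hxw
  · exact absurd ⟨h1, h2.trans hyx1⟩ hxw
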